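/- Let Γ be a compact metric space, T > 0, and let μ_n (n ∈ ℕ) and μ be finite-horizon relaxed controls on Γ × [0,T], i.e. finite Borel measures with μ_n(Γ × [0,t]) = μ(Γ × [0,t]) = t for all t ∈ [0,T]. Suppose (μ_n) converges weakly to μ. Then for every continuous function f : Γ × [0,T] → ℝ, the partial integrals converge uniformly in time: sup_{t∈[0,T]} | ∫_{Γ×[0,t]} f dμ_n − ∫_{Γ×[0,t]} f dμ | → 0 as n → ∞. -/

import Mathlib

open MeasureTheory Filter

/-- if finite-horizon relaxed controls `μ_n` on `Γ × [0,T]` converge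
weakly to a finite-horizon relaxed control `μ`, then for every continuous
`f : Γ × [0,T] → ℝ` the partial integrals `∫_{Γ×[0,t]} f dμ_n` converge to
`∫_{Γ×[0,t]} f dμ` uniformly in `t ∈ [0,T]`. -/
theorem stmt_10 {Γ : Type*} [MetricSpace Γ] [CompactSpace Γ]
    [MeasurableSpace Γ] [BorelSpace Γ]
    (T : ℝ) (hT : 0 < T)
    (μn : ℕ → Measure (Γ × ↥(Set.Icc (0 : ℝ) T)))
    (μ : Measure (Γ × ↥(Set.Icc (0 : ℝ) T)))
    (hfin : ∀ n, IsFiniteMeasure (μn n)) (hfinμ : IsFiniteMeasure μ)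
    (hrelaxedn : ∀ n, ∀ t ∈ Set.Icc (0 : ℝ) T,
      μn n (Set.univ ×ˢ {s : ↥(Set.Icc (0 : ℝ) T) | (s : ℝ) ≤ t}) = ENNReal.ofReal t)
    (hrelaxed : ∀ t ∈ Set.Icc (0 : ℝ) T,
      μ (Set.univ ×ˢ {s : ↥(Set.Icc (0 : ℝ) T) | (s : ℝ) ≤ t}) = ENNReal.ofReal t)
    (hconv : ∀ g : BoundedContinuousFunction (Γ × ↥(Set.Icc (0 : ℝ) T)) ℝ,
      Tendsto (fun n => ∫ x, g x ∂(μn n)) atTop (nhds (∫ x, g x ∂μ)))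
    (f : Γ × ↥(Set.Icc (0 : ℝ) T) → ℝ) (hf : Continuous f) :
    Tendsto (fun n => ⨆ t : Set.Icc (0 : ℝ) T,
        |(∫ x in Set.univ ×ˢ {s : ↥(Set.Icc (0 : ℝ) T) | (s : ℝ) ≤ (t : ℝ)}, f x ∂(μn n)) -
         ∫ x in Set.univ ×ˢ {s : ↥(Set.Icc (0 : ℝ) T) | (s : ℝ) ≤ (t : ℝ)}, f x ∂μ|)
      atTop (nhds 0) := by
  classical
  -- the sets `A r = Γ × [0, r]`
  let A : ℝ → Set (Γ × ↥(Set.Icc (0 : ℝ) T)) :=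
    fun r => Set.univ ×ˢ {s : ↥(Set.Icc (0 : ℝ) T) | (s : ℝ) ≤ r}
  have hA : ∀ r : ℝ, MeasurableSet (A r) := fun r =>
    MeasurableSet.univ.prod
      ((isClosed_le continuous_subtype_val continuous_const).measurableSet)
  have hAmono : ∀ {a b : ℝ}, a ≤ b → A a ⊆ A b := by
    intro a b hab x hx
    exact ⟨trivial, le_trans hx.2 hab⟩
  -- a bound on `f`
  let fb : BoundedContinuousFunction (Γ × ↥(Set.Icc (0 : ℝ) T)) ℝ :=
    BoundedContinuousFunction.mkOfCompact ⟨f, hf⟩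
  let C : ℝ := ‖fb‖
  have hC0 : 0 ≤ C := norm_nonneg _
  have hC : ∀ x, |f x| ≤ C := by
    intro x
    have := fb.norm_coe_le_norm x
    rw [Real.norm_eq_abs] at this
    exact this
  -- strip measures
  have hstrip : ∀ (ν : Measure (Γ × ↥(Set.Icc (0 : ℝ) T))), IsFiniteMeasure ν →
      (∀ t ∈ Set.Icc (0 : ℝ) T, ν (A t) = ENNReal.ofReal t) →
      ∀ a b : ℝ, a ∈ Set.Icc (0 : ℝ) T → b ∈ Set.Icc (0 : ℝ) T → a ≤ b →
        ν (A b \ A a) = ENNReal.ofReal (b - a) := by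
    intro ν hν hrel a b ha hb hab
    haveI := hν
    rw [measure_diff (hAmono hab) (hA a).nullMeasurableSet (measure_ne_top ν _),
      hrel a ha, hrel b hb, ← ENNReal.ofReal_sub b ha.1]
  -- the key Lipschitz-type estimate
  have key : ∀ (ν : Measure (Γ × ↥(Set.Icc (0 : ℝ) T))), IsFiniteMeasure ν →
      (∀ t ∈ Set.Icc (0 : ℝ) T, ν (A t) = ENNReal.ofReal t) →
      ∀ a b : ℝ, a ∈ Set.Icc (0 : ℝ) T → b ∈ Set.Icc (0 : ℝ) T → a ≤ b →
        |(∫ x in A b, f x ∂ν) - ∫ x in A a, f x ∂ν| ≤ C * (b - a) := by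
    intro ν hν hrel a b ha hb hab
    haveI := hν
    have hint : Integrable f ν := by
      have := fb.integrable ν
      exact this
    rw [← integral_diff (hA a) hint.integrableOn (hAmono hab)]
    have hnorm :
        ‖∫ x in A b \ A a, f x ∂ν‖ ≤ C * (ν (A b \ A a)).toReal :=
      norm_setIntegral_le_of_norm_le_const (measure_lt_top ν _)
        (fun x _ => by simpa [Real.norm_eq_abs] using hC x)
    rw [Real.norm_eq_abs] at hnorm
    refine hnorm.trans ?_
    rw [hstrip ν hν hrel a b ha hb hab, ENNReal.toReal_ofReal (by linarith)]
  -- pointwise convergence at each fixed time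
  have hpt : ∀ t : ℝ, t ∈ Set.Icc (0 : ℝ) T →
      Tendsto (fun n => ∫ x in A t, f x ∂(μn n)) atTop
        (nhds (∫ x in A t, f x ∂μ)) := by
    intro t ht
    rw [Metric.tendsto_atTop]
    intro ε hε
    set δ : ℝ := ε / (3 * (C + 1)) with hδdef
    have hC1 : (0 : ℝ) < C + 1 := by linarith
    have hδ0 : 0 < δ := by positivity
    have hδval : δ * (3 * (C + 1)) = ε := by
      rw [hδdef]; field_simp
    have hCδ : C * δ ≤ ε / 3 := by nlinarith [hδ0.le, hC0]
    set t' : ℝ := min (t + δ) T with ht'def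
    have ht'I : t' ∈ Set.Icc (0 : ℝ) T := ⟨le_min (by linarith [ht.1]) hT.le, min_le_right _ _⟩
    have htt' : t ≤ t' := le_min (by linarith) ht.2
    have ht't : t' - t ≤ δ := by
      have := min_le_left (t + δ) T
      linarith
    -- the continuous cutoff
    set φ : ↥(Set.Icc (0 : ℝ) T) → ℝ :=
      fun u => max 0 (min 1 ((t + δ - (u : ℝ)) / δ)) with hφdef
    have hφc : Continuous φ :=
      continuous_const.max (continuous_const.min
        ((continuous_const.sub continuous_subtype_val).div_const δ))
    have hφ01 : ∀ u, 0 ≤ φ u ∧ φ u ≤ 1 := fun u =>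
      ⟨le_max_left _ _, max_le zero_le_one (min_le_left _ _)⟩
    have hφ1 : ∀ u : ↥(Set.Icc (0 : ℝ) T), (u : ℝ) ≤ t → φ u = 1 := by
      intro u hu
      have h1 : (1 : ℝ) ≤ (t + δ - (u : ℝ)) / δ := by
        rw [le_div_iff₀ hδ0]
        linarith
      simp [hφdef, min_eq_left h1]
    have hφ0 : ∀ u : ↥(Set.Icc (0 : ℝ) T), t' < (u : ℝ) → φ u = 0 := by
      intro u hu
      have huT : (u : ℝ) ≤ T := u.2.2
      have h1 : t + δ < (u : ℝ) := by
        rcases min_cases (t + δ) T with ⟨h, _⟩ | ⟨h, hle⟩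
        · rw [ht'def, h] at hu; exact hu
        · rw [ht'def, h] at hu; linarith
      have h2 : (t + δ - (u : ℝ)) / δ ≤ 0 := by
        apply div_nonpos_of_nonpos_of_nonneg <;> linarith
      have h3 : min 1 ((t + δ - (u : ℝ)) / δ) ≤ 0 := le_trans (min_le_right _ _) h2
      simp [hφdef, max_eq_left h3]
    let g : Γ × ↥(Set.Icc (0 : ℝ) T) → ℝ := fun x => f x * φ x.2
    have hgc : Continuous g := by
      exact hf.mul (hφc.comp continuous_snd)
    let gb : BoundedContinuousFunction (Γ × ↥(Set.Icc (0 : ℝ) T)) ℝ :=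
      BoundedContinuousFunction.mkOfCompact ⟨g, hgc⟩
    -- the cutoff estimate, for either measure
    have est : ∀ (ν : Measure (Γ × ↥(Set.Icc (0 : ℝ) T))), IsFiniteMeasure ν →
        (∀ r ∈ Set.Icc (0 : ℝ) T, ν (A r) = ENNReal.ofReal r) →
        |(∫ x in A t, f x ∂ν) - ∫ x, g x ∂ν| ≤ C * δ := by
      intro ν hν hrel
      haveI := hν
      have hgint : Integrable g ν := by
        have := gb.integrable ν
        exact this
      have h1 : ∫ x, g x ∂ν
          = (∫ x in A t', g x ∂ν) + ∫ x in (A t')ᶜ, g x ∂ν :=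
        (integral_add_compl (hA t') hgint).symm
      have h2 : ∫ x in (A t')ᶜ, g x ∂ν = 0 := by
        apply setIntegral_eq_zero_of_forall_eq_zero
        intro x hx
        have hx2 : t' < (x.2 : ℝ) := by
          by_contra h
          exact hx ⟨trivial, not_lt.mp h⟩
        simp [g, hφ0 x.2 hx2]
      have h3 : ∫ x in A t' \ A t, g x ∂ν
          = (∫ x in A t', g x ∂ν) - ∫ x in A t, g x ∂ν :=
        integral_diff (hA t) hgint.integrableOn (hAmono htt')
      have h4 : ∫ x in A t, g x ∂ν = ∫ x in A t, f x ∂ν := by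
        apply setIntegral_congr_fun (hA t)
        intro x hx
        simp [g, hφ1 x.2 hx.2]
      have h5 : |∫ x in A t' \ A t, g x ∂ν| ≤ C * δ := by
        have hnorm :
            ‖∫ x in A t' \ A t, g x ∂ν‖ ≤ C * (ν (A t' \ A t)).toReal := by
          apply norm_setIntegral_le_of_norm_le_const (measure_lt_top ν _)
          intro x _
          rw [Real.norm_eq_abs]
          show |f x * φ x.2| ≤ C
          rw [abs_mul]
          calc |f x| * |φ x.2| ≤ C * 1 := by
                apply mul_le_mul (hC x) _ (abs_nonneg _) hC0
                rw [abs_of_nonneg (hφ01 x.2).1]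
                exact (hφ01 x.2).2
            _ = C := mul_one C
        rw [Real.norm_eq_abs,
          hstrip ν hν hrel t t' ht ht'I htt',
          ENNReal.toReal_ofReal (by linarith)] at hnorm
        exact hnorm.trans (mul_le_mul_of_nonneg_left ht't hC0)
      have heq : (∫ x in A t, f x ∂ν) - ∫ x, g x ∂ν
          = -(∫ x in A t' \ A t, g x ∂ν) := by
        rw [h3, h1, h2, h4]; ring
      rw [heq, abs_neg]
      exact h5
    -- conclude using weak convergence against the cutoff
    have hgconv := hconv gb
    rw [Metric.tendsto_atTop] at hgconv
    obtain ⟨N, hN⟩ := hgconv (ε / 3) (by positivity)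
    refine ⟨N, fun n hn => ?_⟩
    have hmid : |(∫ x, g x ∂(μn n)) - ∫ x, g x ∂μ| < ε / 3 := by
      have := hN n hn
      rw [Real.dist_eq] at this
      simpa [gb] using this
    have h1 := est (μn n) (hfin n) (hrelaxedn n)
    have h2 := est μ hfinμ hrelaxed
    have h2' : |(∫ x, g x ∂μ) - ∫ x in A t, f x ∂μ| ≤ C * δ := by
      rw [abs_sub_comm]; exact h2
    rw [Real.dist_eq]
    calc |(∫ x in A t, f x ∂(μn n)) - ∫ x in A t, f x ∂μ|
        ≤ |(∫ x in A t, f x ∂(μn n)) - ∫ x, g x ∂(μn n)|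
          + |(∫ x, g x ∂(μn n)) - ∫ x in A t, f x ∂μ| := abs_sub_le _ _ _
      _ ≤ |(∫ x in A t, f x ∂(μn n)) - ∫ x, g x ∂(μn n)|
          + (|(∫ x, g x ∂(μn n)) - ∫ x, g x ∂μ|
            + |(∫ x, g x ∂μ) - ∫ x in A t, f x ∂μ|) := by
          gcongr
          exact abs_sub_le _ _ _
      _ < ε := by linarith
  -- the families of partial integrals
  let G : ℕ → ↥(Set.Icc (0 : ℝ) T) → ℝ := fun n t => ∫ x in A (t : ℝ), f x ∂(μn n)
  let Glim : ↥(Set.Icc (0 : ℝ) T) → ℝ := fun t => ∫ x in A (t : ℝ), f x ∂μ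
  -- equicontinuity
  have hlip : ∀ (x y : ↥(Set.Icc (0 : ℝ) T)) (n : ℕ),
      dist (G n x) (G n y) ≤ C * dist x y := by
    intro x y n
    rw [Subtype.dist_eq, Real.dist_eq, Real.dist_eq]
    rcases le_total (y : ℝ) (x : ℝ) with h | h
    · rw [abs_of_nonneg (by linarith : (0:ℝ) ≤ (x : ℝ) - y)]
      exact key (μn n) (hfin n) (hrelaxedn n) y x y.2 x.2 h
    · rw [abs_sub_comm (G n x), abs_sub_comm ((x : ℝ)),
        abs_of_nonneg (by linarith : (0:ℝ) ≤ (y : ℝ) - x)]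
      exact key (μn n) (hfin n) (hrelaxedn n) x y x.2 y.2 h
  have hE : Equicontinuous G :=
    Metric.equicontinuous_of_continuity_modulus (fun r => C * r)
      (by simpa using (continuous_mul_left C).tendsto (0 : ℝ))
      G hlip
  -- uniform convergence from equicontinuity + pointwise convergence
  have hptG : Tendsto G atTop (nhds Glim) := by
    rw [tendsto_pi_nhds]
    intro t
    exact hpt (t : ℝ) t.2
  have hU : TendstoUniformly G Glim atTop := by
    have := (hE.tendsto_uniformFun_iff_pi atTop Glim).mpr hptG
    rwa [UniformFun.tendsto_iff_tendstoUniformly] at this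
  -- conclude
  have hgoal : (fun n => ⨆ t : Set.Icc (0 : ℝ) T,
        |(∫ x in Set.univ ×ˢ {s : ↥(Set.Icc (0 : ℝ) T) | (s : ℝ) ≤ (t : ℝ)}, f x ∂(μn n)) -
         ∫ x in Set.univ ×ˢ {s : ↥(Set.Icc (0 : ℝ) T) | (s : ℝ) ≤ (t : ℝ)}, f x ∂μ|)
      = fun n => ⨆ t : ↥(Set.Icc (0 : ℝ) T), |G n t - Glim t| := rfl
  rw [hgoal, Metric.tendsto_atTop]
  intro ε hε
  rw [Metric.tendstoUniformly_iff] at hU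
  have := hU (ε / 2) (by positivity)
  rw [eventually_atTop] at this
  obtain ⟨N, hN⟩ := this
  refine ⟨N, fun n hn => ?_⟩
  have hbound : ∀ t : ↥(Set.Icc (0 : ℝ) T), |G n t - Glim t| ≤ ε / 2 := by
    intro t
    have := hN n hn t
    rw [Real.dist_eq, abs_sub_comm] at this
    exact this.le
  have hsup : (⨆ t : ↥(Set.Icc (0 : ℝ) T), |G n t - Glim t|) ≤ ε / 2 :=
    Real.iSup_le hbound (by positivity)
  have hsup0 : 0 ≤ ⨆ t : ↥(Set.Icc (0 : ℝ) T), |G n t - Glim t| :=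
    Real.iSup_nonneg fun t => abs_nonneg _
  rw [Real.dist_eq, sub_zero]
  calc abs (⨆ t : ↥(Set.Icc (0 : ℝ) T), |G n t - Glim t|)
      = ⨆ t : ↥(Set.Icc (0 : ℝ) T), |G n t - Glim t| := abs_of_nonneg hsup0
    _ ≤ ε / 2 := hsup
    _ < ε := by linarith
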